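/- Let d ≥ 3, k ≥ 3, G = K_{d+1}, and let H be any graph on n = kd vertices. Then χ_G(H) + χ_G(complement of H) ≤ k + 2. -/
import Mathlib


open SimpleGraph

/-- `H` contains a copy of `G`: an injective map preserving adjacency. -/
def ContainsCopy {α β : Type*} (G : SimpleGraph α) (H : SimpleGraph β) : Prop :=
  ∃ f : α ↪ β, ∀ a b, G.Adj a b → H.Adj (f a) (f b)

/-- `H` is `G`-free. -/
def GFree {α β : Type*} (G : SimpleGraph α) (H : SimpleGraph β) : Prop :=
  ¬ ContainsCopy G H

/-- The `G`-free chromatic number of `H`. -/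
noncomputable def gChrom {α β : Type*} (G : SimpleGraph α) (H : SimpleGraph β) : ℕ :=
  sInf {k | ∃ c : β → Fin k, ∀ i, GFree G (H.induce {v | c v = i})}

/-- `H` is `G`-free `k`-critical. -/
def GFreeCritical {α β : Type*} (G : SimpleGraph α) (H : SimpleGraph β) (k : ℕ) : Prop :=
  gChrom G H = k ∧ ∀ F : H.Subgraph, F ≠ ⊤ → gChrom G F.coe ≤ k - 1

/-- Extend a coloring of `H - v` by giving `v` a fresh color. -/
lemma aux_fresh {β : Type*} (H : SimpleGraph β) (v : β) (m : ℕ)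
    (h : (H.induce {w | w ≠ v}).Colorable m) : H.Colorable (m + 1) := by
  classical
  obtain ⟨c⟩ := h
  refine ⟨SimpleGraph.Coloring.mk
    (fun w => if hw : w = v then Fin.last m else (c ⟨w, hw⟩).castSucc) ?_⟩
  intro a b hab
  by_cases ha : a = v <;> by_cases hb : b = v
  · exact absurd (ha.trans hb.symm) hab.ne
  · simp only [dif_pos ha, dif_neg hb]
    exact fun h => (Fin.castSucc_lt_last _).ne' h
  · simp only [dif_neg ha, dif_pos hb]
    exact fun h => (Fin.castSucc_lt_last _).ne h
  · simp only [dif_neg ha, dif_neg hb]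
    intro h
    exact c.valid (G := H.induce {w | w ≠ v}) (v := ⟨a, ha⟩) (w := ⟨b, hb⟩) hab
      (Fin.castSucc_injective _ h)

/-- Extend a coloring of `H - v` without a new color when `deg v < m`. -/
lemma aux_ext {β : Type*} [Fintype β] (H : SimpleGraph β) (v : β) (m : ℕ)
    [DecidableRel H.Adj] [DecidableEq β]
    (h : (H.induce {w | w ≠ v}).Colorable m) (hdeg : H.degree v < m) : H.Colorable m := by
  obtain ⟨c⟩ := h
  set T : Finset (Fin m) := (H.neighborFinset v).attach.image
    (fun w => c ⟨w.1, (H.mem_neighborFinset v w.1 |>.mp w.2).ne'⟩) with hT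
  have hTcard : T.card < m := by
    calc T.card ≤ (H.neighborFinset v).attach.card := Finset.card_image_le
    _ = H.degree v := by rw [Finset.card_attach]; rfl
    _ < m := hdeg
  obtain ⟨i, hi⟩ : ∃ i : Fin m, i ∉ T := by
    by_contra hcon
    push_neg at hcon
    have : (Finset.univ : Finset (Fin m)) ⊆ T := fun x _ => hcon x
    have := Finset.card_le_card this
    simp at this
    omega
  refine ⟨SimpleGraph.Coloring.mk
    (fun w => if hw : w = v then i else c ⟨w, hw⟩) ?_⟩
  intro a b hab
  by_cases ha : a = v <;> by_cases hb : b = v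
  · exact absurd (ha.trans hb.symm) hab.ne
  · simp only [dif_pos ha, dif_neg hb]
    intro h
    apply hi
    rw [hT, h]
    have hbN : b ∈ H.neighborFinset v := (H.mem_neighborFinset v b).mpr (ha ▸ hab)
    exact Finset.mem_image.mpr ⟨⟨b, hbN⟩, Finset.mem_attach _ _, rfl⟩
  · simp only [dif_neg ha, dif_pos hb]
    intro h
    apply hi
    rw [hT, ← h]
    have haN : a ∈ H.neighborFinset v := (H.mem_neighborFinset v a).mpr (hb ▸ hab.symm)
    exact Finset.mem_image.mpr ⟨⟨a, haN⟩, Finset.mem_attach _ _, rfl⟩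
  · simp only [dif_neg ha, dif_neg hb]
    exact c.valid (G := H.induce {w | w ≠ v}) (v := ⟨a, ha⟩) (w := ⟨b, hb⟩) hab

lemma aux_compl_induce {β : Type*} (H : SimpleGraph β) (s : Set β) :
    (H.induce s)ᶜ = (Hᶜ).induce s := by
  ext x y
  simp only [compl_adj, comap_adj, Function.Embedding.coe_subtype, ne_eq,
    SimpleGraph.induce]
  constructor
  · rintro ⟨hxy, hna⟩
    exact ⟨fun h => hxy (Subtype.ext h), hna⟩
  · rintro ⟨hxy, hna⟩
    exact ⟨fun h => hxy (congrArg Subtype.val h), hna⟩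

/-- Nordhaus–Gaddum upper bound. -/
lemma aux_NG : ∀ (n : ℕ) {β : Type*} [Fintype β] (H : SimpleGraph β),
    Fintype.card β = n →
    ∃ a b, H.Colorable a ∧ Hᶜ.Colorable b ∧ a + b ≤ n + 1 := by
  intro n
  induction n using Nat.strong_induction_on with
  | _ n ih =>
    intro β _ H hcard
    classical
    rcases Nat.eq_zero_or_pos n with h0 | hpos
    · subst h0
      haveI : IsEmpty β := Fintype.card_eq_zero_iff.mp hcard
      exact ⟨0, 0, ⟨SimpleGraph.Coloring.mk isEmptyElim (fun {a} => isEmptyElim a)⟩,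
        ⟨SimpleGraph.Coloring.mk isEmptyElim (fun {a} => isEmptyElim a)⟩, by omega⟩
    · obtain ⟨v⟩ : Nonempty β := Fintype.card_pos_iff.mp (hcard ▸ hpos)
      have hcard' : Fintype.card {w | w ≠ v} = n - 1 := by
        have h1 : Fintype.card {w : β // ¬ w = v} = Fintype.card β - Fintype.card {w : β // w = v} :=
          Fintype.card_subtype_compl _
        have h2 : Fintype.card {w : β // w = v} = 1 := Fintype.card_subtype_eq v
        have h3 : Fintype.card ({w | w ≠ v} : Set β) = Fintype.card {w : β // ¬ w = v} :=
          Fintype.card_congr (Equiv.refl _)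
        omega
      obtain ⟨a, b, hA, hB, hab⟩ := ih (n - 1) (by omega) (H.induce {w | w ≠ v}) hcard'
      rw [aux_compl_induce] at hB
      by_cases h1 : H.degree v < a
      · exact ⟨a, b + 1, aux_ext H v a hA h1, aux_fresh Hᶜ v b hB, by omega⟩
      by_cases h2 : Hᶜ.degree v < b
      · exact ⟨a + 1, b, aux_fresh H v a hA, aux_ext Hᶜ v b hB h2, by omega⟩
      · push_neg at h1 h2
        have hdc : Hᶜ.degree v = Fintype.card β - 1 - H.degree v := H.degree_compl v
        have hdlt : H.degree v < Fintype.card β := H.degree_lt_card_verts v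
        exact ⟨a + 1, b + 1, aux_fresh H v a hA, aux_fresh Hᶜ v b hB, by omega⟩

/-- Grouping `d` color classes at a time gives a `K_{d+1}`-free partition. -/
lemma aux_group {β : Type*} [Fintype β] (d m : ℕ) (hd : 0 < d) (H : SimpleGraph β)
    (h : H.Colorable m) :
    gChrom (completeGraph (Fin (d + 1))) H ≤ (m + d - 1) / d := by
  obtain ⟨c⟩ := h
  set K := (m + d - 1) / d with hK
  have hm : m ≤ K * d := by
    rcases Nat.eq_zero_or_pos m with rfl | hm0
    · exact Nat.zero_le _
    · have hEq : m + d - 1 = (m - 1) + d := by omega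
      have hK1 : K = (m - 1) / d + 1 := by rw [hK, hEq, Nat.add_div_right _ hd]
      have h2 : (m - 1) / d < K := by omega
      have h3 := (Nat.div_lt_iff_lt_mul hd).mp h2
      exact Nat.le_of_pred_lt h3
  have hcb : ∀ w : β, ((c w : ℕ)) / d < K := by
    intro w
    exact (Nat.div_lt_iff_lt_mul hd).mpr (lt_of_lt_of_le (c w).2 hm)
  apply Nat.sInf_le
  refine ⟨fun w => ⟨((c w : ℕ)) / d, hcb w⟩, ?_⟩
  rintro i ⟨f, hf⟩
  have key : ∀ j : Fin (d + 1), ((c ↑(f j) : ℕ)) / d = (i : ℕ) := by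
    intro j
    exact congrArg Fin.val (f j).2
  have hginj : Function.Injective
      (fun j : Fin (d + 1) => (⟨((c ↑(f j) : ℕ)) % d, Nat.mod_lt _ hd⟩ : Fin d)) := by
    intro j1 j2 hj
    by_contra hne
    have hadj : H.Adj ↑(f j1) ↑(f j2) := hf j1 j2 hne
    have hvalid : c ↑(f j1) ≠ c ↑(f j2) := c.valid hadj
    apply hvalid
    apply Fin.ext
    have emod : ((c ↑(f j1) : ℕ)) % d = ((c ↑(f j2) : ℕ)) % d := by
      have := congrArg Fin.val hj
      simpa using this
    have ediv : ((c ↑(f j1) : ℕ)) / d = ((c ↑(f j2) : ℕ)) / d := by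
      rw [key j1, key j2]
    conv_lhs => rw [← Nat.div_add_mod ((c ↑(f j1) : ℕ)) d]
    rw [ediv, emod, Nat.div_add_mod]
  have := Fintype.card_le_of_injective _ hginj
  simp only [Fintype.card_fin] at this
  omega

theorem stmt13 {β : Type*} [Fintype β] (d k : ℕ) (hd : 3 ≤ d) (hk : 3 ≤ k)
    (H : SimpleGraph β) (hn : Fintype.card β = k * d) :
    gChrom (completeGraph (Fin (d + 1))) H + gChrom (completeGraph (Fin (d + 1))) Hᶜ ≤
      k + 2 := by
  classical
  obtain ⟨a, b, hA, hB, hab⟩ := aux_NG (k * d) H hn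
  have hd0 : 0 < d := by omega
  have g1 := aux_group d a hd0 H hA
  have g2 := aux_group d b hd0 Hᶜ hB
  have e1 : ((a + d - 1) / d) * d ≤ a + d - 1 := Nat.div_mul_le_self _ _
  have e2 : ((b + d - 1) / d) * d ≤ b + d - 1 := Nat.div_mul_le_self _ _
  have key : ((a + d - 1) / d + (b + d - 1) / d) * d < (k + 2) * d := by
    have hrw : (k + 2) * d = k * d + 2 * d := by ring
    rw [Nat.add_mul, hrw]
    have hsum : ((a + d - 1) / d) * d + ((b + d - 1) / d) * d ≤ (a + d - 1) + (b + d - 1) :=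
      add_le_add e1 e2
    have hfin : (a + d - 1) + (b + d - 1) < k * d + 2 * d := by
      set N := k * d with hN
      omega
    exact lt_of_le_of_lt hsum hfin
  have hlt : (a + d - 1) / d + (b + d - 1) / d < k + 2 :=
    Nat.lt_of_mul_lt_mul_right key
  exact le_trans (add_le_add g1 g2) hlt.le
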